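/- Let d ≥ 1 and let G be a connected finite d-regular simple graph. Then the density of G is exactly d/2, and every subgraph H of G with at least one vertex and H ≠ G has density strictly less than d/2. -/

import Mathlib

/-- The density `‖G‖/|G|` of a finite simple graph. -/
noncomputable def graphDensity {V : Type*} (G : SimpleGraph V) : ℚ :=
  (G.edgeSet.ncard : ℚ) / (Nat.card V : ℚ)

/-- The density `‖H‖/|H|` of a subgraph of a host graph. -/
noncomputable def subgraphDensity {W : Type*} {G : SimpleGraph W} (H : G.Subgraph) : ℚ :=
  (H.edgeSet.ncard : ℚ) / (H.verts.ncard : ℚ)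

open Classical in
/-- Handshake lemma for subgraphs of a finite graph. -/
lemma subgraph_handshake {V : Type} [Fintype V] {G : SimpleGraph V} (H : G.Subgraph) :
    ∑ v ∈ H.verts.toFinset, (H.neighborSet v).ncard = 2 * H.edgeSet.ncard := by
  classical
  have h1 := H.coe.sum_degrees_eq_twice_card_edges
  simp only [← SimpleGraph.card_neighborSet_eq_degree, SimpleGraph.edgeFinset_card,
    ← Nat.card_eq_fintype_card] at h1
  have h4 : ∑ v ∈ H.verts.toFinset, (H.neighborSet v).ncard
      = ∑ v : H.verts, (H.neighborSet (v : V)).ncard :=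
    Finset.sum_subtype _ (fun x => Set.mem_toFinset) _
  rw [h4]
  have h5 : ∀ v : H.verts, (H.neighborSet (v : V)).ncard = Nat.card (H.coe.neighborSet v) := by
    intro v
    rw [← Nat.card_coe_set_eq]
    exact Nat.card_congr (SimpleGraph.Subgraph.coeNeighborSetEquiv v).symm
  simp only [h5]
  rw [h1]
  congr 1
  rw [← Nat.card_coe_set_eq, ← H.image_coe_edgeSet_coe]
  exact Nat.card_congr (Equiv.Set.image _ _ (Sym2.map.injective Subtype.coe_injective))

/-- Let `d ≥ 1` and let `G` be a connected finite `d`-regular simple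
graph. Then the density of `G` is exactly `d/2`, and every subgraph `H` of `G` with at
least one vertex and `H ≠ G` has density strictly less than `d/2`. -/
theorem stmt_12 (V : Type) [Fintype V] (d : ℕ) (hd : 1 ≤ d) (G : SimpleGraph V)
    (hconn : G.Connected) (hreg : ∀ v : V, (G.neighborSet v).ncard = d) :
    graphDensity G = (d : ℚ) / 2 ∧
    ∀ H : G.Subgraph, H.verts.Nonempty → H ≠ ⊤ → subgraphDensity H < (d : ℚ) / 2 := by
  classical
  haveI : Nonempty V := hconn.nonempty
  have htop := subgraph_handshake (⊤ : G.Subgraph)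
  have htopn : ∀ v, ((⊤ : G.Subgraph).neighborSet v).ncard = d := by
    intro v; rw [SimpleGraph.Subgraph.neighborSet_top]; exact hreg v
  simp only [htopn, SimpleGraph.Subgraph.verts_top, Set.toFinset_univ,
    Finset.sum_const, smul_eq_mul, SimpleGraph.Subgraph.edgeSet_top] at htop
  have hVpos : 0 < Fintype.card V := Fintype.card_pos
  constructor
  · unfold graphDensity
    rw [Nat.card_eq_fintype_card]
    rw [div_eq_div_iff (by positivity : (0:ℚ) < Fintype.card V).ne' (two_ne_zero (α := ℚ))]
    rw [Finset.card_univ] at htop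
    have h : ((Fintype.card V : ℕ) : ℚ) * d = 2 * G.edgeSet.ncard := by exact_mod_cast htop
    linarith
  · intro H hne hH
    have key : ∃ v ∈ H.verts, (H.neighborSet v).ncard < d := by
      by_cases hv : H.verts = Set.univ
      · have hex : ∃ a b, G.Adj a b ∧ ¬ H.Adj a b := by
          by_contra hc
          push_neg at hc
          apply hH
          ext x y
          · simp [hv]
          · simp only [SimpleGraph.Subgraph.top_adj]
            exact ⟨fun h => H.adj_sub h, fun h => hc x y h⟩
        obtain ⟨a, b, hab, hnab⟩ := hex
        refine ⟨a, by simp [hv], ?_⟩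
        rw [← hreg a]
        apply Set.ncard_lt_ncard _ (Set.toFinite _)
        exact ⟨fun x hx => H.adj_sub hx, fun hsub => hnab (hsub hab)⟩
      · obtain ⟨u, hu⟩ := hne
        obtain ⟨w, hw⟩ : ∃ w, w ∉ H.verts := by
          by_contra hc; push_neg at hc
          exact hv (Set.eq_univ_of_forall hc)
        obtain ⟨p⟩ := hconn.preconnected u w
        obtain ⟨dart, _, hd1, hd2⟩ := p.exists_boundary_dart H.verts hu hw
        refine ⟨dart.fst, hd1, ?_⟩
        rw [← hreg dart.fst]
        apply Set.ncard_lt_ncard _ (Set.toFinite _)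
        exact ⟨fun x hx => H.adj_sub hx,
          fun hsub => hd2 (H.edge_vert (H.adj_symm (hsub dart.adj)))⟩
    obtain ⟨v, hv, hvd⟩ := key
    have hsum : ∑ x ∈ H.verts.toFinset, (H.neighborSet x).ncard < d * H.verts.ncard := by
      have hle : ∀ x ∈ H.verts.toFinset, (H.neighborSet x).ncard ≤ d := by
        intro x _
        rw [← hreg x]
        exact Set.ncard_le_ncard (fun y hy => H.adj_sub hy) (Set.toFinite _)
      calc ∑ x ∈ H.verts.toFinset, (H.neighborSet x).ncard
          < ∑ _x ∈ H.verts.toFinset, d :=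
            Finset.sum_lt_sum hle ⟨v, Set.mem_toFinset.mpr hv, hvd⟩
        _ = d * H.verts.ncard := by
            rw [Finset.sum_const, smul_eq_mul, Set.ncard_eq_toFinset_card', mul_comm]
    rw [subgraph_handshake H] at hsum
    have hnpos : 0 < H.verts.ncard := Set.Nonempty.ncard_pos (Set.toFinite _) hne
    unfold subgraphDensity
    rw [div_lt_div_iff₀ (by exact_mod_cast hnpos) two_pos]
    have h2 : (2 * H.edgeSet.ncard : ℚ) < d * H.verts.ncard := by exact_mod_cast hsum
    linarith
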